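/- Let f : ℂ → ℂ be an SD map that preserves ℝ (i.e., f(x) is real for every real x). Then either f is the identity map (f(z) = z for all z ∈ ℂ) or f is complex conjugation (f(z) = z̄ for all z ∈ ℂ). No continuity assumption is required. -/

import Mathlib

/-- A function `f : F → F` on a field `F` is an *SD map* if for all `x ≠ y` one has
`f x ≠ f y` and `f ((x+y)/(x-y)) = (f x + f y) / (f x - f y)`. -/
def IsSDMap {F : Type*} [Field F] (f : F → F) : Prop :=
  ∀ ⦃x y : F⦄, x ≠ y →
    f x ≠ f y ∧ f ((x + y) / (x - y)) = (f x + f y) / (f x - f y)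
variable {f : ℂ → ℂ}

lemma sd_inj (hf : IsSDMap f) : Function.Injective f := by
  intro x y h
  by_contra hne
  exact (hf hne).1 h

lemma sd_one (hf : IsSDMap f) : f 1 = 1 := by
  have h1 := (hf (show (1:ℂ) ≠ 0 by norm_num)).2
  have h2 := (hf (show (2:ℂ) ≠ 0 by norm_num)).2
  norm_num at h1 h2
  -- h1 : f 1 = (f 1 + f 0) / (f 1 - f 0), h2 : f 1 = (f 2 + f 0) / (f 2 - f 0)
  have h12 : f 1 ≠ f 2 := (hf (show (1:ℂ) ≠ 2 by norm_num)).1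
  have h10 : f 1 ≠ f 0 := (hf (show (1:ℂ) ≠ 0 by norm_num)).1
  have h20 : f 2 ≠ f 0 := (hf (show (2:ℂ) ≠ 0 by norm_num)).1
  have e1 : f 1 * (f 1 - f 0) = f 1 + f 0 := by
    field_simp [sub_ne_zero.mpr h10] at h1; linear_combination h1
  have e2 : f 1 * (f 2 - f 0) = f 2 + f 0 := by
    field_simp [sub_ne_zero.mpr h20] at h2; linear_combination h2
  have : (f 1 - 1) * (f 1 - f 2) = 0 := by linear_combination e1 - e2
  rcases mul_eq_zero.mp this with h | h
  · exact sub_eq_zero.mp h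
  · exact absurd (sub_eq_zero.mp h) h12

lemma sd_zero (hf : IsSDMap f) : f 0 = 0 := by
  have h1 := (hf (show (1:ℂ) ≠ 0 by norm_num)).2
  norm_num [sd_one hf] at h1
  have h10 : f 1 ≠ f 0 := (hf (show (1:ℂ) ≠ 0 by norm_num)).1
  rw [sd_one hf] at h10
  have hne : (1:ℂ) - f 0 ≠ 0 := sub_ne_zero.mpr h10
  field_simp [hne] at h1
  linear_combination (-1/2 : ℂ) * h1

lemma sd_ne (hf : IsSDMap f) {x : ℂ} (hx : x ≠ 0) : f x ≠ 0 := by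
  intro h
  exact hx (sd_inj hf (h.trans (sd_zero hf).symm))

lemma sd_odd (hf : IsSDMap f) (x : ℂ) : f (-x) = - f x := by
  rcases eq_or_ne x 0 with rfl | hx
  · simp [sd_zero hf]
  have hxy : x ≠ -x := by
    intro h; apply hx; linear_combination h / 2
  have h := (hf hxy).2
  have hx2 : x - -x ≠ 0 := by
    intro h; apply hx; linear_combination h / 2
  have : ((x + -x) / (x - -x)) = 0 := by rw [add_neg_cancel, zero_div]
  rw [this, sd_zero hf] at h
  have hne : f x - f (-x) ≠ 0 := sub_ne_zero.mpr (hf hxy).1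
  have := (div_eq_zero_iff.mp h.symm).resolve_right hne
  linear_combination this

lemma sd_div (hf : IsSDMap f) (x y : ℂ) (hy : y ≠ 0) : f (x / y) = f x / f y := by
  rcases eq_or_ne x y with rfl | hxy
  · rw [div_self hy, div_self (sd_ne hf hy), sd_one hf]
  have h := (hf hxy).2
  set t := x / y with ht
  have ht1 : t ≠ 1 := by
    rw [ht]; intro h1
    exact hxy ((div_eq_one_iff_eq hy).mp h1)
  have hσ := (hf ht1).2
  rw [sd_one hf] at hσ
  have harg : (t + 1) / (t - 1) = (x + y) / (x - y) := by
    rw [ht]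
    have hxys : x - y ≠ 0 := sub_ne_zero.mpr hxy
    field_simp
  rw [harg, h] at hσ
  have hfne : f x - f y ≠ 0 := sub_ne_zero.mpr (hf hxy).1
  have hft1 : f t - 1 ≠ 0 := by
    rw [← sd_one hf]
    exact sub_ne_zero.mpr (fun hh => ht1 (sd_inj hf hh))
  have hfy : f y ≠ 0 := sd_ne hf hy
  field_simp at hσ ⊢
  linear_combination hσ / 2

lemma sd_mul (hf : IsSDMap f) (x y : ℂ) : f (x * y) = f x * f y := by
  rcases eq_or_ne y 0 with rfl | hy
  · simp [sd_zero hf]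
  have := sd_div hf (x * y) y hy
  rw [mul_div_cancel_right₀ x hy] at this
  rw [this]
  field_simp [sd_ne hf hy]

lemma sd_star (hf : IsSDMap f) (u v : ℂ) :
    (f u - f v) * f (u + v) = (f u + f v) * f (u - v) := by
  rcases eq_or_ne v 0 with rfl | hv
  · simp [sd_zero hf]
  have hxy : (u + v) / 2 ≠ (u - v) / 2 := by
    intro h
    apply hv
    field_simp at h
    linear_combination h / 2
  have h := (hf hxy).2
  have harg1 : ((u + v) / 2 + (u - v) / 2) / ((u + v) / 2 - (u - v) / 2) = u / v := by
    field_simp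
    rw [show u + v - (u - v) = 2 * v by ring, show u + v + (u - v) = 2 * u by ring,
      div_eq_iff (mul_ne_zero two_ne_zero hv)]
    ring
  have h2 : f ((u + v) / 2) = f (u + v) / f 2 := sd_div hf _ _ (by norm_num)
  have h3 : f ((u - v) / 2) = f (u - v) / f 2 := sd_div hf _ _ (by norm_num)
  have h4 : f (u / v) = f u / f v := sd_div hf _ _ hv
  rw [harg1, h2, h3, h4] at h
  have hf2 : f 2 ≠ 0 := sd_ne hf (by norm_num)
  have hfv : f v ≠ 0 := sd_ne hf hv
  have hAB : f (u + v) - f (u - v) ≠ 0 := by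
    refine sub_ne_zero.mpr fun hh => hv ?_
    have := sd_inj hf hh
    linear_combination this / 2
  have hden : f (u + v) / f 2 - f (u - v) / f 2 ≠ 0 := by
    rw [div_sub_div_same]
    exact div_ne_zero hAB hf2
  field_simp at h
  linear_combination h

lemma sd_key (hf : IsSDMap f)
    (hR : ∀ x : ℝ, ∃ r : ℝ, f (x : ℂ) = (r : ℂ)) (hi : f Complex.I = Complex.I) :
    ∀ z : ℂ, f z = z := by
  choose F hF using hR
  have hF0 : F 0 = 0 := by
    have := hF 0
    rw [show ((0:ℝ):ℂ) = 0 by norm_num, sd_zero hf] at this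
    exact_mod_cast this.symm
  have hF1 : F 1 = 1 := by
    have := hF 1
    rw [show ((1:ℝ):ℂ) = 1 by norm_num, sd_one hf] at this
    exact_mod_cast this.symm
  have hFpos : ∀ x : ℝ, 0 < x → 0 < F x := by
    intro x hx
    have hsq : f ((x:ℂ)) = (F (Real.sqrt x))^2 := by
      have : (x : ℂ) = (Real.sqrt x : ℂ) * (Real.sqrt x : ℂ) := by
        rw [← Complex.ofReal_mul, Real.mul_self_sqrt hx.le]
      rw [this, sd_mul hf, hF]
      ring
    have hx0 : F x = (F (Real.sqrt x))^2 := by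
      have := (hF x).symm.trans hsq
      exact_mod_cast this
    have hne : F x ≠ 0 := by
      intro h
      have : f ((x:ℂ)) = 0 := by rw [hF, h]; norm_num
      exact sd_ne hf (by exact_mod_cast hx.ne') this
    have : 0 ≤ F x := hx0 ▸ sq_nonneg _
    exact lt_of_le_of_ne this (Ne.symm hne)
  -- real version of sd_star for shifted-by-real arguments
  have hstarR : ∀ x y : ℝ, (F x - F y) * F (x + y) = (F x + F y) * F (x - y) := by
    intro x y
    have := sd_star hf (x:ℂ) (y:ℂ)
    rw [hF, hF, show ((x:ℂ) + y) = (((x+y:ℝ)):ℂ) by push_cast; ring,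
      show ((x:ℂ) - y) = (((x-y:ℝ)):ℂ) by push_cast; ring, hF, hF] at this
    exact_mod_cast this
  have hFgt1 : ∀ x : ℝ, 1 < x → 1 < F x := by
    intro x hx
    have h := hstarR x 1
    rw [hF1] at h
    have h1 : 0 < F (x + 1) := hFpos _ (by linarith)
    have h2 : 0 < F (x - 1) := hFpos _ (by linarith)
    have h3 : 0 < F x := hFpos _ (by linarith)
    nlinarith
  have hFmul : ∀ x y : ℝ, F (x * y) = F x * F y := by
    intro x y
    have := sd_mul hf (x:ℂ) (y:ℂ)
    rw [hF, hF, show ((x:ℂ) * y) = (((x*y:ℝ)):ℂ) by push_cast; ring, hF] at this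
    exact_mod_cast this
  have hFmono : ∀ x y : ℝ, 0 < x → x < y → F x < F y := by
    intro x y hx hxy
    have hyx : F y = F (y / x) * F x := by
      rw [← hFmul]
      congr 1
      field_simp
    have h1 : 1 < F (y / x) := hFgt1 _ ((one_lt_div hx).mpr hxy)
    have h2 : 0 < F x := hFpos _ hx
    nlinarith
  have hF2 : F 2 = 2 := by
    set c := F 2 with hc
    have hc1 : 1 < c := hFgt1 2 (by norm_num)
    have hF3 : 1 < F 3 := hFgt1 3 (by norm_num)
    have hF5 : 1 < F 5 := hFgt1 5 (by norm_num)
    have hF4 : F 4 = c ^ 2 := by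
      have := hFmul 2 2
      norm_num at this
      rw [this]; ring
    have hF6 : F 6 = c * F 3 := by
      have := hFmul 2 3
      norm_num at this
      rw [this]
    have E1 := hstarR 2 1
    have E2 := hstarR 4 1
    have E3 := hstarR 5 1
    norm_num [hF1, hF4, hF6] at E1 E2 E3
    rw [← hc] at E1
    -- E1 : (c - 1) * F 3 = c + 1
    -- E2 : (c^2 - 1) * F 5 = (c^2+1) * F 3
    -- E3 : (F 5 - 1) * (c * F 3) = (F 5 + 1) * c^2
    have key : (F 5 * (c+1)) * ((2*c^2 - 4*c) * c) = 0 := by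
      linear_combination (c*(c-1)) * E2 + (c*(c^2+1) + (c+1)*(F 5 - 1)*c) * E1 - ((c+1)*(c-1)) * E3
    rcases mul_eq_zero.mp key with h | h
    · nlinarith
    rcases mul_eq_zero.mp h with h2 | h2
    · have h3 := mul_eq_zero.mp (show c * (c-2) = 0 by linear_combination h2/2)
      rcases h3 with h4 | h4
      · nlinarith
      · linarith
    · nlinarith
  have h2c : f 2 = 2 := by
    have := hF 2
    rw [hF2] at this
    exact_mod_cast this
  have hnat : ∀ n : ℕ, f n = n ∧ f ((n:ℂ)+1) = (n:ℂ)+1 := by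
    intro n
    induction n with
    | zero =>
      constructor
      · simpa using sd_zero hf
      · simpa using sd_one hf
    | succ k ih =>
      refine ⟨by push_cast; exact ih.2, ?_⟩
      rcases Nat.eq_zero_or_pos k with rfl | hk
      · push_cast
        norm_num
        convert h2c using 2 <;> norm_num
      · have hs := sd_star hf ((k:ℂ)+1) 1
        rw [sd_one hf, ih.2, show ((k:ℂ)+1) - 1 = (k:ℂ) from by ring, ih.1] at hs
        push_cast
        have hk0 : (k:ℂ) ≠ 0 := Nat.cast_ne_zero.mpr hk.ne'
        have : (k:ℂ) * f ((k:ℂ) + 1 + 1) = (k:ℂ) * ((k:ℂ) + 1 + 1) := by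
          linear_combination hs
        exact mul_left_cancel₀ hk0 this
  have hnat' : ∀ n : ℕ, f n = n := fun n => (hnat n).1
  have hint : ∀ n : ℤ, f n = n := by
    intro n
    rcases n with m | m
    · exact_mod_cast hnat' m
    · have hc : ((Int.negSucc m : ℤ) : ℂ) = -(((m+1 : ℕ)) : ℂ) := by push_cast; ring
      rw [hc, sd_odd hf, hnat' (m+1)]
  have hrat : ∀ q : ℚ, f q = q := by
    intro q
    have hd : ((q.den : ℂ)) ≠ 0 := Nat.cast_ne_zero.mpr q.den_nz
    rw [Rat.cast_def, sd_div hf _ _ hd, hint, hnat', ← Rat.cast_def]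
  have hFq : ∀ q : ℚ, F ((q:ℝ)) = (q:ℝ) := by
    intro q
    have h1 : f (((q:ℝ)):ℂ) = (q:ℂ) := by
      rw [show (((q:ℝ)):ℂ) = (q:ℂ) by push_cast; ring]
      exact hrat q
    have h2 := (hF ((q:ℝ))).symm.trans h1
    exact_mod_cast h2
  have hFid : ∀ x : ℝ, 0 < x → F x = x := by
    intro x hx
    by_contra hne
    rcases lt_or_gt_of_ne hne with h | h
    · obtain ⟨q, hq1, hq2⟩ := exists_rat_btwn (show max (F x) 0 < x from max_lt h hx)
      have hq0 : 0 < (q:ℝ) := (le_max_right (F x) 0).trans_lt hq1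
      have h2 := hFmono (q:ℝ) x hq0 hq2
      rw [hFq] at h2
      have h3 : F x < (q:ℝ) := (le_max_left (F x) 0).trans_lt hq1
      linarith
    · obtain ⟨q, hq1, hq2⟩ := exists_rat_btwn h
      have h2 := hFmono x (q:ℝ) hx hq1
      rw [hFq] at h2
      linarith
  have hreal : ∀ x : ℝ, f x = x := by
    intro x
    rcases lt_trichotomy x 0 with h | rfl | h
    · have : ((x:ℝ):ℂ) = -(((-x:ℝ)):ℂ) := by push_cast; ring
      rw [this, sd_odd hf, hF, hFid (-x) (by linarith)]
    · rw [hF, hF0]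
    · rw [hF, hFid x h]
  have hsq2 : ∀ r : ℝ, f (Complex.I + (r:ℂ)) = Complex.I + (r:ℂ) ∨
      f (Complex.I + (r:ℂ)) = -(Complex.I + (r:ℂ)) := by
    intro r
    have h1 := sd_star hf Complex.I (r:ℂ)
    rw [hi, hreal r] at h1
    have hprod : f (Complex.I + (r:ℂ)) * f (Complex.I - (r:ℂ)) = -(1 + (r:ℂ)^2) := by
      rw [← sd_mul hf]
      have e1 : (Complex.I + (r:ℂ)) * (Complex.I - (r:ℂ)) = -(((1 + r^2 : ℝ)):ℂ) := by
        push_cast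
        linear_combination Complex.I_sq
      rw [e1, sd_odd hf, hreal]
      push_cast; ring
    have hIne : Complex.I - (r:ℂ) ≠ 0 := by
      intro hc
      have := congrArg Complex.im hc
      simp at this
    have h3 : (Complex.I - (r:ℂ)) * ((f (Complex.I + (r:ℂ)) - (Complex.I + r)) *
        (f (Complex.I + (r:ℂ)) + (Complex.I + r))) = 0 := by
      linear_combination f (Complex.I + (r:ℂ)) * h1 + (Complex.I + (r:ℂ)) * hprod -
        (Complex.I + (r:ℂ)) * Complex.I_sq
    rcases mul_eq_zero.mp h3 with hc | hc
    · exact absurd hc hIne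
    rcases mul_eq_zero.mp hc with hc2 | hc2
    · exact Or.inl (sub_eq_zero.mp hc2)
    · exact Or.inr (by linear_combination hc2)
  have hplus : ∀ r : ℝ, f (Complex.I + (r:ℂ)) = Complex.I + (r:ℂ) := by
    intro r
    rcases hsq2 r with h | h
    · exact h
    exfalso
    rcases eq_or_ne r 0 with rfl | hr
    · rw [show Complex.I + ((0:ℝ):ℂ) = Complex.I by norm_num, hi] at h
      have := congrArg Complex.im h
      norm_num at this
    have h4 := sd_star hf (Complex.I + (r:ℂ)) (r:ℂ)
    rw [hreal r, h, show Complex.I + (r:ℂ) + (r:ℂ) = Complex.I + ((2*r:ℝ):ℂ) by push_cast; ring,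
      show Complex.I + (r:ℂ) - (r:ℂ) = Complex.I by ring, hi] at h4
    rcases hsq2 (2*r) with h5 | h5 <;> rw [h5] at h4
    · have h6 : (r:ℂ) * ((r:ℂ) + Complex.I) = 0 := by
        push_cast at h4
        linear_combination (-1/4) * h4
      rcases mul_eq_zero.mp h6 with h7 | h7
      · exact hr (by exact_mod_cast h7)
      · have := congrArg Complex.im h7
        simp at this
    · have h6 : ((r:ℝ):ℂ) * Complex.I * 4 = ((2 - 4*r^2 : ℝ):ℂ) := by
        push_cast at h4 ⊢
        linear_combination h4 - 2*Complex.I_sq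
      have h7 := congrArg Complex.im h6
      simp [← Complex.ofReal_pow] at h7
      exact hr (by linarith)
  intro z
  rcases eq_or_ne z.im 0 with hb | hb
  · have hz : z = ((z.re : ℝ) : ℂ) := by
      apply Complex.ext <;> simp [hb]
    rw [hz, hreal]
  · have hb' : ((z.im:ℝ):ℂ) ≠ 0 := Complex.ofReal_ne_zero.mpr hb
    have hz : z = ((z.im:ℝ):ℂ) * (Complex.I + ((z.re/z.im:ℝ):ℂ)) := by
      push_cast
      field_simp
      linear_combination (Complex.re_add_im z).symm
    calc f z = f (((z.im:ℝ):ℂ) * (Complex.I + ((z.re/z.im:ℝ):ℂ))) := by rw [← hz]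
      _ = f ((z.im:ℝ):ℂ) * f (Complex.I + ((z.re/z.im:ℝ):ℂ)) := sd_mul hf _ _
      _ = ((z.im:ℝ):ℂ) * (Complex.I + ((z.re/z.im:ℝ):ℂ)) := by rw [hreal, hplus]
      _ = z := hz.symm

theorem real_preserving_sd_map_complex (f : ℂ → ℂ) (hf : IsSDMap f)
    (hR : ∀ x : ℝ, ∃ r : ℝ, f (x : ℂ) = (r : ℂ)) :
    (∀ z : ℂ, f z = z) ∨ (∀ z : ℂ, f z = (starRingEnd ℂ) z) := by
  have hI2 : (f Complex.I - Complex.I) * (f Complex.I + Complex.I) = 0 := by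
    have hm := sd_mul hf Complex.I Complex.I
    rw [Complex.I_mul_I] at hm
    have h1 : f (-1 : ℂ) = -1 := by
      rw [show (-1:ℂ) = -((1:ℝ):ℂ) by norm_num, sd_odd hf]
      rw [show ((1:ℝ):ℂ) = 1 by norm_num, sd_one hf]
    rw [h1] at hm
    linear_combination -hm - Complex.I_sq
  rcases mul_eq_zero.mp hI2 with h | h
  · exact Or.inl (sd_key hf hR (sub_eq_zero.mp h))
  · right
    have hfI : f Complex.I = -Complex.I := by linear_combination h
    set g : ℂ → ℂ := fun z => (starRingEnd ℂ) (f z) with hg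
    have hfg : IsSDMap g := by
      intro x y hxy
      obtain ⟨h1, h2⟩ := hf hxy
      constructor
      · intro hc
        exact h1 (star_injective hc)
      · simp only [hg, h2, map_div₀, map_add, map_sub]
    have hgR : ∀ x : ℝ, ∃ r : ℝ, g (x:ℂ) = (r:ℂ) := by
      intro x
      obtain ⟨r, hr⟩ := hR x
      exact ⟨r, by simp [hg, hr]⟩
    have hgI : g Complex.I = Complex.I := by
      simp [hg, hfI]
    have hgid := sd_key hfg hgR hgI
    intro z
    have hz := congrArg (starRingEnd ℂ) (hgid z)
    simpa [hg] using hz
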